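/- Let ḡ(z) = conj(g(conj z)) = √(a+i)·(−i·a·c/z + 1). Let C be a positively oriented circle of center w₀ ∈ ℂ and radius r > 0 such that |w₀| < r, |w₀ − b| < r and |w₀ + c| > r (so that 0 and b lie inside C and −c lies outside C). Then (1/(2πi)) ∮_C f(z)g(z) dz = −2a·√(a²+1) and (1/(2πi)) ∮_C f(z)ḡ(z) dz = 0. -/

import Mathlib

open Complex Real

lemma circleIntegral_add {f g : ℂ → ℂ} {c : ℂ} {R : ℝ} (hf : CircleIntegrable f c R)
    (hg : CircleIntegrable g c R) :
    (∮ z in C(c, R), (f z + g z)) = (∮ z in C(c, R), f z) + ∮ z in C(c, R), g z := by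
  simp only [circleIntegral, smul_add]
  exact intervalIntegral.integral_add hf.out hg.out

/-- Integral of a sum of three simple poles: two inside, one outside. -/
lemma tri_integral (w₀ : ℂ) (r : ℝ) (hr : 0 < r) (c₀ c₁ c₂ p q s : ℂ)
    (hp : p ∈ Metric.ball w₀ r) (hq : q ∈ Metric.ball w₀ r)
    (hs : s ∉ Metric.closedBall w₀ r) :
    (∮ z in C(w₀, r), (c₀ * (z - p)⁻¹ + (c₁ * (z - q)⁻¹ + c₂ * (z - s)⁻¹)))
      = (c₀ + c₁) * (2 * (Real.pi : ℂ) * I) := by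
  have hps : p ∉ Metric.sphere w₀ r := by
    simp only [Metric.mem_ball, Metric.mem_sphere] at *
    exact ne_of_lt hp
  have hqs : q ∉ Metric.sphere w₀ r := by
    simp only [Metric.mem_ball, Metric.mem_sphere] at *
    exact ne_of_lt hq
  have hss : s ∉ Metric.sphere w₀ r := by
    simp only [Metric.mem_closedBall, not_le, Metric.mem_sphere] at *
    exact ne_of_gt hs
  have key : ∀ w : ℂ, w ∉ Metric.sphere w₀ r →
      CircleIntegrable (fun z => (z - w)⁻¹) w₀ r := by
    intro w hw
    refine circleIntegrable_sub_inv_iff.mpr (Or.inr ?_)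
    rwa [abs_of_pos hr]
  have keyc : ∀ (A w : ℂ), w ∉ Metric.sphere w₀ r →
      CircleIntegrable (fun z => A * (z - w)⁻¹) w₀ r := by
    intro A w hw
    have := key w hw
    exact IntervalIntegrable.const_mul this A
  have hzero : (∮ z in C(w₀, r), (z - s)⁻¹) = 0 := by
    apply Complex.circleIntegral_eq_zero_of_differentiable_on_off_countable hr.le
      Set.countable_empty
    · apply ContinuousOn.inv₀
      · exact (continuous_id.sub continuous_const).continuousOn
      · intro z hz
        exact sub_ne_zero.2 (fun h => hs (h ▸ hz))
    · intro z hz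
      have hzs : z - s ≠ 0 := sub_ne_zero.2
        (fun h => hs (h ▸ Metric.ball_subset_closedBall hz.1))
      exact ((differentiableAt_id.sub_const s).inv hzs)
  have A : (∮ z in C(w₀, r), (c₀ * (z - p)⁻¹ + (c₁ * (z - q)⁻¹ + c₂ * (z - s)⁻¹)))
      = (∮ z in C(w₀, r), c₀ * (z - p)⁻¹) +
        ∮ z in C(w₀, r), (c₁ * (z - q)⁻¹ + c₂ * (z - s)⁻¹) :=
    circleIntegral_add (keyc c₀ p hps) ((keyc c₁ q hqs).add (keyc c₂ s hss))
  have B : (∮ z in C(w₀, r), (c₁ * (z - q)⁻¹ + c₂ * (z - s)⁻¹))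
      = (∮ z in C(w₀, r), c₁ * (z - q)⁻¹) + ∮ z in C(w₀, r), c₂ * (z - s)⁻¹ :=
    circleIntegral_add (keyc c₁ q hqs) (keyc c₂ s hss)
  rw [A, B, circleIntegral.integral_const_mul, circleIntegral.integral_const_mul,
    circleIntegral.integral_const_mul,
    circleIntegral.integral_sub_inv_of_mem_ball hp,
    circleIntegral.integral_sub_inv_of_mem_ball hq, hzero]
  ring

/-- With `b, c > 0`, `a = √(b/c)`, `f(z) = √(a+i)·(i/(z+c) − a/(z−b))`,
`g(z) = √(a−i)·(iac/z + 1)` and `ḡ(z) = conj (g (conj z)) = √(a+i)·(−iac/z + 1)`: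
for any positively oriented circle of center `w₀` and radius `r` containing `0` and `b`
inside and `−c` outside, `(1/(2πi)) ∮ f·g = −2a√(a²+1)` and `(1/(2πi)) ∮ f·ḡ = 0`. -/
theorem stmt15 (b c : ℝ) (hb : 0 < b) (hc : 0 < c) (a : ℝ) (ha : a = Real.sqrt (b / c))
    (f g gbar : ℂ → ℂ)
    (hf : ∀ z : ℂ, f z = ((a : ℂ) + I) ^ ((1 : ℂ) / 2) * (I / (z + (c : ℂ)) - (a : ℂ) / (z - (b : ℂ))))
    (hg : ∀ z : ℂ, g z = ((a : ℂ) - I) ^ ((1 : ℂ) / 2) * (I * (a : ℂ) * (c : ℂ) / z + 1))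
    (hgbar : ∀ z : ℂ, gbar z = ((a : ℂ) + I) ^ ((1 : ℂ) / 2) * (-(I * (a : ℂ) * (c : ℂ) / z) + 1))
    (w₀ : ℂ) (r : ℝ) (hr : 0 < r)
    (h0 : ‖w₀‖ < r) (hb' : ‖w₀ - (b : ℂ)‖ < r)
    (hc' : r < ‖w₀ + (c : ℂ)‖) :
    (1 / (2 * (Real.pi : ℂ) * I)) * (∮ z in C(w₀, r), f z * g z)
        = -2 * (a : ℂ) * (Real.sqrt (a ^ 2 + 1) : ℂ) ∧
    (1 / (2 * (Real.pi : ℂ) * I)) * (∮ z in C(w₀, r), f z * gbar z) = 0 := by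
  have ha0 : 0 ≤ a := ha ▸ Real.sqrt_nonneg _
  -- a² c = b
  have ha2 : a ^ 2 = b / c := by
    rw [ha, sq, Real.mul_self_sqrt (le_of_lt (div_pos hb hc))]
  have hb2 : ((a : ℂ)) ^ 2 * (c : ℂ) = (b : ℂ) := by
    have : a ^ 2 * c = b := by rw [ha2]; field_simp
    push_cast [← this]; ring
  -- the square roots
  set S₁ : ℂ := ((a : ℂ) + I) ^ ((1 : ℂ) / 2) with hS₁
  set S₂ : ℂ := ((a : ℂ) - I) ^ ((1 : ℂ) / 2) with hS₂
  have haI : ((a : ℂ) + I) ≠ 0 := by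
    intro h
    have := congrArg Complex.im h
    simp at this
  have hargI : ((a : ℂ) + I).arg ≠ Real.pi := by
    intro h
    rw [Complex.arg_eq_pi_iff] at h
    have := h.2
    simp at this
  have hconj : S₂ = (starRingEnd ℂ) S₁ := by
    have h1 : ((a : ℂ) - I) = (starRingEnd ℂ) ((a : ℂ) + I) := by
      simp [Complex.ext_iff]
    have h2 : ((1 : ℂ) / 2) = (starRingEnd ℂ) ((1 : ℂ) / 2) := by
      simp [Complex.ext_iff]
    rw [hS₂, hS₁, h1, Complex.conj_cpow _ _ hargI, ← h2]
  have habs : ‖((a : ℂ) + I)‖ = Real.sqrt (a ^ 2 + 1) := by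
    rw [Complex.norm_def, Complex.normSq_apply]
    norm_num [sq]
  have hK : S₁ * S₂ = (Real.sqrt (a ^ 2 + 1) : ℂ) := by
    rw [hconj, Complex.mul_conj]
    have h3 : ‖S₁‖ = Real.sqrt (a ^ 2 + 1) ^ ((1 : ℝ) / 2) := by
      rw [hS₁]
      have : ((1 : ℂ) / 2) = (((1 : ℝ) / 2 : ℝ) : ℂ) := by norm_num
      rw [this, Complex.norm_cpow_real, habs]
    rw [Complex.normSq_eq_norm_sq, h3, ← Real.rpow_natCast _ 2, ← Real.rpow_mul
      (Real.sqrt_nonneg _)]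
    norm_num
  have h2S : S₁ * S₁ = (a : ℂ) + I := by
    rw [hS₁, ← Complex.cpow_add _ _ haI]
    norm_num
  -- membership facts
  have hp0 : (0 : ℂ) ∈ Metric.ball w₀ r := by
    rw [Metric.mem_ball, Complex.dist_eq]
    simpa using h0
  have hpb : ((b : ℝ) : ℂ) ∈ Metric.ball w₀ r := by
    rw [Metric.mem_ball, Complex.dist_eq]
    rwa [← norm_neg, neg_sub]
  have hpc : (-(c : ℂ)) ∉ Metric.closedBall w₀ r := by
    rw [Metric.mem_closedBall, Complex.dist_eq, not_le]
    calc r < ‖w₀ + (c : ℂ)‖ := hc'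
      _ = ‖-(c : ℂ) - w₀‖ := by rw [← norm_neg]; ring_nf
  -- nonvanishing on the sphere
  have hsphere : ∀ z ∈ Metric.sphere w₀ r, z ≠ 0 ∧ z - (b : ℂ) ≠ 0 ∧ z + (c : ℂ) ≠ 0 := by
    intro z hz
    rw [Metric.mem_sphere, Complex.dist_eq] at hz
    refine ⟨?_, ?_, ?_⟩
    · rintro rfl
      rw [← norm_neg, neg_sub, sub_zero] at hz
      exact absurd hz (ne_of_lt h0)
    · intro h
      have : z = (b : ℂ) := by linear_combination h
      rw [this, ← norm_neg, neg_sub] at hz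
      exact absurd hz (ne_of_lt hb')
    · intro h
      have : z = -(c : ℂ) := by linear_combination h
      rw [this] at hz
      have : ‖-(c:ℂ) - w₀‖ = ‖w₀ + (c:ℂ)‖ := by
        rw [← norm_neg]; ring_nf
      rw [this] at hz
      exact absurd hz (ne_of_gt hc')
  have h2pi : (2 * (Real.pi : ℂ) * I) ≠ 0 := by
    simp [Real.pi_ne_zero, Complex.I_ne_zero]
  constructor
  · -- first integral
    have hcong : (∮ z in C(w₀, r), f z * g z)
        = ∮ z in C(w₀, r), ((S₁ * S₂ * (-(a:ℂ) + I)) * (z - 0)⁻¹ +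
            ((S₁ * S₂ * (-(a:ℂ) - I)) * (z - (b : ℂ))⁻¹ +
             (S₁ * S₂ * ((a:ℂ) + I)) * (z - (-(c : ℂ)))⁻¹)) := by
      apply circleIntegral.integral_congr hr.le
      intro z hz
      obtain ⟨hz0, hzb, hzc⟩ := hsphere z hz
      have hzc' : z - (-(c : ℂ)) = z + (c : ℂ) := by ring
      simp only [hf, hg, sub_zero, hzc']
      rw [← hb2] at hzb ⊢
      have hzb2 : z - (c:ℂ) * (a:ℂ) ^ 2 ≠ 0 := by rwa [mul_comm]
      field_simp
      ring_nf
      simp only [Complex.I_sq]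
      ring
    rw [hcong, tri_integral w₀ r hr _ _ _ _ _ _ hp0 hpb hpc]
    rw [hK]
    field_simp
    ring
  · -- second integral
    have hcong : (∮ z in C(w₀, r), f z * gbar z)
        = ∮ z in C(w₀, r), ((S₁ * S₁ * ((a:ℂ) - I)) * (z - 0)⁻¹ +
            ((S₁ * S₁ * (I - (a:ℂ))) * (z - (b : ℂ))⁻¹ +
             (S₁ * S₁ * (-(a:ℂ) + I)) * (z - (-(c : ℂ)))⁻¹)) := by
      apply circleIntegral.integral_congr hr.le
      intro z hz
      obtain ⟨hz0, hzb, hzc⟩ := hsphere z hz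
      have hzc' : z - (-(c : ℂ)) = z + (c : ℂ) := by ring
      simp only [hf, hgbar, sub_zero, hzc']
      rw [← hb2] at hzb ⊢
      have hzb2 : z - (c:ℂ) * (a:ℂ) ^ 2 ≠ 0 := by rwa [mul_comm]
      field_simp
      ring_nf
      simp only [Complex.I_sq]
      ring
    rw [hcong, tri_integral w₀ r hr _ _ _ _ _ _ hp0 hpb hpc]
    have : S₁ * S₁ * ((a:ℂ) - I) + S₁ * S₁ * (I - (a:ℂ)) = 0 := by ring
    rw [this, zero_mul, mul_zero]
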